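/- Every path-component of a ladder Y is itself a ladder; that is, each equivalence class Y₁ of the path relation on Y satisfies the ladder exchange condition: whenever (i,j),(p,q) ∈ Y₁ with i ≤ p and j ≤ q, also (i,q),(p,j) ∈ Y₁. -/
import Mathlib


set_option maxHeartbeats 1000000
set_option synthInstance.maxHeartbeats 1000000

open CategoryTheory

namespace LadderDet

/-- The position `p` lies in the `m × n` grid `{1,…,m} × {1,…,n}`. -/
def InGrid (m n : ℕ) (p : ℕ × ℕ) : Prop :=
  1 ≤ p.1 ∧ p.1 ≤ m ∧ 1 ≤ p.2 ∧ p.2 ≤ n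

/-- `Y` is a ladder in the `m × n` grid. -/
def IsLadder (m n : ℕ) (Y : Set (ℕ × ℕ)) : Prop :=
  (∀ p ∈ Y, InGrid m n p) ∧
  ∀ i j p q : ℕ, (i, j) ∈ Y → (p, q) ∈ Y → i ≤ p → j ≤ q → (i, q) ∈ Y ∧ (p, j) ∈ Y

/-- A ladder together with the standard nontriviality assumptions:
`(1,n), (m,1) ∈ Y` and every row and every column of the grid meets `Y`. -/
def StdLadder (m n : ℕ) (Y : Set (ℕ × ℕ)) : Prop :=
  IsLadder m n Y ∧ (1, n) ∈ Y ∧ (m, 1) ∈ Y ∧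
  (∀ i, 1 ≤ i → i ≤ m → ∃ j, (i, j) ∈ Y) ∧
  (∀ j, 1 ≤ j → j ≤ n → ∃ i, (i, j) ∈ Y)

/-- Two positions differ by exactly `1` in exactly one coordinate. -/
def AdjStep (p q : ℕ × ℕ) : Prop :=
  (p.1 = q.1 ∧ (p.2 + 1 = q.2 ∨ q.2 + 1 = p.2)) ∨
  (p.2 = q.2 ∧ (p.1 + 1 = q.1 ∨ q.1 + 1 = p.1))

/-- There is a path in `Y` from `p` to `q`. -/
def HasPath (Y : Set (ℕ × ℕ)) (p q : ℕ × ℕ) : Prop :=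
  p ∈ Y ∧ q ∈ Y ∧
    Relation.ReflTransGen (fun a b => a ∈ Y ∧ b ∈ Y ∧ AdjStep a b) p q

/-- `Y` is path-connected. -/
def PathConnected (Y : Set (ℕ × ℕ)) : Prop :=
  ∀ p ∈ Y, ∀ q ∈ Y, HasPath Y p q

/-- `M` is (the set of entries of) a `t × t` minor of `Y`. -/
def IsMinor (t : ℕ) (Y : Set (ℕ × ℕ)) (M : Set (ℕ × ℕ)) : Prop :=
  ∃ r c : Fin t → ℕ, StrictMono r ∧ StrictMono c ∧
    (∀ u v, (r u, c v) ∈ Y) ∧ M = {p | ∃ u v, p = (r u, c v)}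

/-- `Y` is `t`-disconnected. -/
def TDisconnected (m n t : ℕ) (Y : Set (ℕ × ℕ)) : Prop :=
  ∃ Z₁ Z₂ : Set (ℕ × ℕ), Z₁.Nonempty ∧ Z₂.Nonempty ∧
    IsLadder m n Z₁ ∧ IsLadder m n Z₂ ∧ Z₁ ∩ Z₂ = ∅ ∧ Z₁ ∪ Z₂ = Y ∧
    ∀ M, IsMinor t Y M → M ⊆ Z₁ ∨ M ⊆ Z₂

/-- `Y` is `t`-connected. -/
def TConnected (m n t : ℕ) (Y : Set (ℕ × ℕ)) : Prop := ¬ TDisconnected m n t Y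

/-- `p` is a lower inside corner of `Y`. -/
def IsLowerCorner (Y : Set (ℕ × ℕ)) (p : ℕ × ℕ) : Prop :=
  p ∈ Y ∧ (p.1 - 1, p.2) ∈ Y ∧ (p.1, p.2 - 1) ∈ Y ∧ (p.1 - 1, p.2 - 1) ∉ Y

/-- `p` is an upper inside corner of `Y`. -/
def IsUpperCorner (Y : Set (ℕ × ℕ)) (p : ℕ × ℕ) : Prop :=
  p ∈ Y ∧ (p.1 + 1, p.2) ∈ Y ∧ (p.1, p.2 + 1) ∈ Y ∧ (p.1 + 1, p.2 + 1) ∉ Y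

/-- `Y` is one-sided: path-connected and with no lower or no upper inside corners. -/
def OneSided (Y : Set (ℕ × ℕ)) : Prop :=
  PathConnected Y ∧
  ((∀ p, ¬ IsLowerCorner Y p) ∨ (∀ p, ¬ IsUpperCorner Y p))

/-- `Y` is two-sided: path-connected with at least one lower and one upper inside corner. -/
def TwoSided (Y : Set (ℕ × ℕ)) : Prop :=
  PathConnected Y ∧ (∃ p, IsLowerCorner Y p) ∧ (∃ p, IsUpperCorner Y p)

section Algebra

variable (k : Type) [Field k]

/-- The `t × t` minor of the generic matrix determined by rows `r` and columns `c`,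
as an element of the polynomial ring `k[Y]`. -/
noncomputable def minorPoly {t : ℕ} {Y : Set (ℕ × ℕ)} (r c : Fin t → ℕ)
    (h : ∀ u v, (r u, c v) ∈ Y) : MvPolynomial Y k :=
  (Matrix.of fun u v : Fin t =>
    (MvPolynomial.X ⟨(r u, c v), h u v⟩ : MvPolynomial Y k)).det

/-- The ideal `I_t(Y) ⊆ k[Y]` generated by all `t × t` minors of `X` lying in `Y`. -/
noncomputable def minorIdeal (t : ℕ) (Y : Set (ℕ × ℕ)) : Ideal (MvPolynomial Y k) :=
  Ideal.span {f | ∃ (r c : Fin t → ℕ) (_ : StrictMono r) (_ : StrictMono c)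
    (h : ∀ u v, (r u, c v) ∈ Y), f = minorPoly k r c h}

/-- The ladder determinantal ring `R_t(Y) = k[Y]/I_t(Y)`. -/
abbrev LadderRing (t : ℕ) (Y : Set (ℕ × ℕ)) : Type :=
  MvPolynomial Y k ⧸ minorIdeal k t Y

/-- The residue `x_{ij}` of the variable `X_{ij}` in `R_t(Y)`. -/
noncomputable def xres (t : ℕ) {Y : Set (ℕ × ℕ)} (p : ℕ × ℕ) (hp : p ∈ Y) :
    LadderRing k t Y :=
  Ideal.Quotient.mk (minorIdeal k t Y) (MvPolynomial.X ⟨p, hp⟩)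

/-- The ideal of `R_2(Y)` generated by the residues of the variables in row `r`
(an ideal of type `𝔮`). -/
noncomputable def rowIdeal (Y : Set (ℕ × ℕ)) (r : ℕ) : Ideal (LadderRing k 2 Y) :=
  Ideal.span {z | ∃ q, ∃ h : (r, q) ∈ Y, z = xres k 2 (r, q) h}

/-- The ideal of `R_2(Y)` generated by the residues of the variables in column `b`
(an ideal of type `𝔮'`). -/
noncomputable def colIdeal (Y : Set (ℕ × ℕ)) (b : ℕ) : Ideal (LadderRing k 2 Y) :=
  Ideal.span {z | ∃ p, ∃ h : (p, b) ∈ Y, z = xres k 2 (p, b) h}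

/-- The ideal `𝔭` of `R_2(Y)` generated by the residues of the variables weakly
northwest of the position `(c, d)`. -/
noncomputable def cornerIdeal (Y : Set (ℕ × ℕ)) (c d : ℕ) : Ideal (LadderRing k 2 Y) :=
  Ideal.span {z | ∃ p q, ∃ h : (p, q) ∈ Y, p ≤ c ∧ q ≤ d ∧ z = xres k 2 (p, q) h}

end Algebra

/-- An ideal of `k[Y]` is a monomial ideal if it is generated by monomials. -/
def IsMonomialIdeal {k : Type} [Field k] {Y : Set (ℕ × ℕ)}
    (M : Ideal (MvPolynomial Y k)) : Prop :=
  ∃ S : Set (Y →₀ ℕ), M = Ideal.span ((fun d => MvPolynomial.monomial d (1 : k)) '' S)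

/-- A finitely generated module `C` over a commutative ring `R` is semidualizing if
the natural homothety map `R → Hom_R(C, C)` is bijective and `Ext^i_R(C, C) = 0` for
all `i ≥ 1`. -/
def IsSemidualizing {R : Type} [CommRing R] (C : ModuleCat.{0} R) : Prop :=
  Module.Finite R C ∧
  Function.Bijective (LinearMap.lsmul R C) ∧
  ∀ i : ℕ, 1 ≤ i →
    Subsingleton (((Ext R (ModuleCat.{0} R) i).obj (Opposite.op C)).obj C)

/-- `C` has finite injective dimension: for some `n`, `Ext^i_R(M, C) = 0` for all
modules `M` and all `i > n`. -/
def HasFiniteInjDim {R : Type} [CommRing R] (C : ModuleCat.{0} R) : Prop :=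
  ∃ n : ℕ, ∀ i : ℕ, n < i → ∀ M : ModuleCat.{0} R,
    Subsingleton (((Ext R (ModuleCat.{0} R) i).obj (Opposite.op M)).obj C)


section Aux

variable {m n : ℕ} {Y : Set (ℕ × ℕ)}

private lemma adjStep_symm {p q : ℕ × ℕ} (h : AdjStep p q) : AdjStep q p := by
  unfold AdjStep at *; tauto

private lemma hasPath_trans {a b c : ℕ × ℕ} (h1 : HasPath Y a b) (h2 : HasPath Y b c) :
    HasPath Y a c :=
  ⟨h1.1, h2.2.1, h1.2.2.trans h2.2.2⟩

private lemma rtg_symm {a b : ℕ × ℕ}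
    (h : Relation.ReflTransGen (fun u v => u ∈ Y ∧ v ∈ Y ∧ AdjStep u v) a b) :
    Relation.ReflTransGen (fun u v => u ∈ Y ∧ v ∈ Y ∧ AdjStep u v) b a := by
  induction h with
  | refl => exact .refl
  | tail _ hstep ih =>
      exact Relation.ReflTransGen.head ⟨hstep.2.1, hstep.1, adjStep_symm hstep.2.2⟩ ih

private lemma hasPath_symm {a b : ℕ × ℕ} (h : HasPath Y a b) : HasPath Y b a :=
  ⟨h.2.1, h.1, rtg_symm h.2.2⟩

private lemma hasPath_step {a b : ℕ × ℕ} (h : HasPath Y a b) {c : ℕ × ℕ} (hc : c ∈ Y)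
    (hadj : AdjStep b c) : HasPath Y a c :=
  hasPath_trans h ⟨h.2.1, hc, .single ⟨h.2.1, hc, hadj⟩⟩

private lemma key (hY : IsLadder m n Y) {a b : ℕ × ℕ}
    (hpath : Relation.ReflTransGen (fun u v => u ∈ Y ∧ v ∈ Y ∧ AdjStep u v) a b)
    (ha : a ∈ Y) :
    a.1 ≤ b.1 → a.2 ≤ b.2 → HasPath Y a (a.1, b.2) ∧ HasPath Y a (b.1, a.2) := by
  induction hpath with
  | refl =>
      intro _ _
      exact ⟨⟨ha, ha, .refl⟩, ⟨ha, ha, .refl⟩⟩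
  | @tail x b hax hstep ih =>
      intro h1 h2
      obtain ⟨hx, hb, hadj⟩ := hstep
      have hYab := hY.2 a.1 a.2 b.1 b.2 ha hb h1 h2
      have hpax : HasPath Y a x := ⟨ha, hx, hax⟩
      rcases hadj with ⟨he, hv⟩ | ⟨he, hv⟩
      · -- horizontal step: x.1 = b.1
        rcases hv with hv | hv
        · -- x.2 + 1 = b.2
          by_cases hj : a.2 ≤ x.2
          · have hih := ih (by omega) hj
            refine ⟨hasPath_step hih.1 hYab.1 ?_, he ▸ hih.2⟩
            left; exact ⟨rfl, Or.inl hv⟩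
          · -- a.2 = b.2
            have haq : a.2 = b.2 := by omega
            have h1' : HasPath Y a (a.1, b.2) := by
              rw [← haq]; exact ⟨ha, ha, .refl⟩
            have h2' : HasPath Y a (b.1, a.2) := by
              rw [haq]; exact hasPath_step hpax hb (Or.inl ⟨he, Or.inl hv⟩)
            exact ⟨h1', h2'⟩
        · -- b.2 + 1 = x.2
          have hih := ih (by omega) (by omega)
          refine ⟨hasPath_step hih.1 hYab.1 ?_, he ▸ hih.2⟩
          left; exact ⟨rfl, Or.inr hv⟩
      · -- vertical step: x.2 = b.2
        rcases hv with hv | hv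
        · -- x.1 + 1 = b.1
          by_cases hi : a.1 ≤ x.1
          · have hih := ih hi (by omega)
            refine ⟨he ▸ hih.1, hasPath_step hih.2 hYab.2 ?_⟩
            right; exact ⟨rfl, Or.inl hv⟩
          · -- a.1 = b.1
            have hap : a.1 = b.1 := by omega
            have h1' : HasPath Y a (a.1, b.2) := by
              rw [hap]; exact hasPath_step hpax hb (Or.inr ⟨he, Or.inl hv⟩)
            have h2' : HasPath Y a (b.1, a.2) := by
              rw [← hap]; exact ⟨ha, ha, .refl⟩
            exact ⟨h1', h2'⟩
        · -- b.1 + 1 = x.1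
          have hih := ih (by omega) (by omega)
          refine ⟨he ▸ hih.1, hasPath_step hih.2 hYab.2 ?_⟩
          right; exact ⟨rfl, Or.inr hv⟩

end Aux

/-- Every path-component of a ladder is itself a ladder. -/
theorem pathComponent_isLadder (m n : ℕ) (Y : Set (ℕ × ℕ)) (hY : IsLadder m n Y)
    (p₀ : ℕ × ℕ) (hp₀ : p₀ ∈ Y) (Y₁ : Set (ℕ × ℕ))
    (hY₁ : Y₁ = {q | HasPath Y p₀ q}) :
    IsLadder m n Y₁ := by
  subst hY₁
  constructor
  · intro p hp
    exact hY.1 p hp.2.1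
  · intro i j p q hij hpq hip hjq
    have hab : HasPath Y (i, j) (p, q) := hasPath_trans (hasPath_symm hij) hpq
    have hk := key hY hab.2.2 hab.1 hip hjq
    exact ⟨hasPath_trans hij hk.1, hasPath_trans hij hk.2⟩

end LadderDet
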